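/- For every integer n ≥ 1, the difference of consecutive Fourier coefficients of 1/cos(x/4), namely a_n - a_{n-1} where a_n = (8/π) ∫_0^{π/4} cos(4nt)/cos(t) dt, equals (8√2/π) (-1)^n [1/(4n-3) - 1/(4n-1)]. -/

import Mathlib

open Real

/-- The Fourier cosine coefficients of F(x) = 1/cos(x/4) on [-π, π]. -/
noncomputable def fourierA (n : ℕ) : ℝ :=
  (8 / π) * ∫ t in (0:ℝ)..(π / 4), Real.cos (4 * n * t) / Real.cos t

lemma cos_pos_on_uIcc {t : ℝ} (ht : t ∈ Set.uIcc (0:ℝ) (π / 4)) : 0 < Real.cos t := by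
  rw [Set.uIcc_of_le (by positivity)] at ht
  apply Real.cos_pos_of_mem_Ioo
  constructor
  · linarith [ht.1, Real.pi_pos]
  · have := ht.2
    nlinarith [Real.pi_pos]

lemma integrable_aux (c : ℝ) :
    IntervalIntegrable (fun t => Real.cos (c * t) / Real.cos t) MeasureTheory.volume 0 (π / 4) := by
  apply ContinuousOn.intervalIntegrable
  apply ContinuousOn.div
  · exact (Real.continuous_cos.comp (continuous_const.mul continuous_id)).continuousOn
  · exact Real.continuous_cos.continuousOn
  · intro t ht
    exact (cos_pos_on_uIcc ht).ne'

lemma integral_cos_mul' {c : ℝ} (hc : c ≠ 0) (b : ℝ) :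
    ∫ t in (0:ℝ)..b, Real.cos (c * t) = Real.sin (c * b) / c := by
  rw [intervalIntegral.integral_comp_mul_left Real.cos hc]
  simp [integral_cos, div_eq_inv_mul]

/-- For n ≥ 1, aₙ - a_{n-1} = (8√2/π) (-1)ⁿ [1/(4n-3) - 1/(4n-1)]. -/
theorem fourier_coeff_difference (n : ℕ) (hn : 1 ≤ n) :
    fourierA n - fourierA (n - 1)
      = (8 * Real.sqrt 2 / π) * (-1 : ℝ) ^ n
          * (1 / (4 * (n : ℝ) - 3) - 1 / (4 * (n : ℝ) - 1)) := by
  set m : ℝ := (n : ℝ) with hm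
  have hm1 : (1:ℝ) ≤ m := by rw [hm]; exact_mod_cast hn
  have hcast : ((n - 1 : ℕ) : ℝ) = m - 1 := by
    push_cast [Nat.cast_sub hn]; ring
  have h1ne : (4*m - 1) ≠ 0 := by linarith
  have h3ne : (4*m - 3) ≠ 0 := by linarith
  have hπ : π ≠ 0 := Real.pi_ne_zero
  have key : fourierA n - fourierA (n - 1)
      = (8 / π) * ∫ t in (0:ℝ)..(π / 4),
          (2 * Real.cos ((4*m-1) * t) - 2 * Real.cos ((4*m-3) * t)) := by
    unfold fourierA
    rw [← mul_sub, ← intervalIntegral.integral_sub (integrable_aux (4 * n))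
      (integrable_aux (4 * ((n - 1 : ℕ) : ℝ)))]
    congr 1
    apply intervalIntegral.integral_congr
    intro t ht
    have hc : Real.cos t ≠ 0 := (cos_pos_on_uIcc ht).ne'
    have h1 := Real.cos_sub_cos (4*m*t) ((4*m-4)*t)
    rw [show (4*m*t + (4*m-4)*t)/2 = (4*m-2)*t by ring,
        show (4*m*t - (4*m-4)*t)/2 = 2*t by ring, Real.sin_two_mul] at h1
    have h2 := Real.cos_sub_cos ((4*m-1)*t) ((4*m-3)*t)
    rw [show ((4*m-1)*t + (4*m-3)*t)/2 = (4*m-2)*t by ring,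
        show ((4*m-1)*t - (4*m-3)*t)/2 = t by ring] at h2
    simp only [hcast, ← hm]
    rw [show 4 * (m - 1) * t = (4*m-4)*t by ring]
    field_simp
    rw [show 4 * t * (m - 1) = (4*m-4)*t by ring, show t * (4*m-1) = (4*m-1)*t by ring,
      show t * (4*m-3) = (4*m-3)*t by ring]
    linear_combination h1 - 2 * Real.cos t * h2
  rw [key]
  rw [intervalIntegral.integral_sub
    (Continuous.intervalIntegrable (by fun_prop) _ _)
    (Continuous.intervalIntegrable (by fun_prop) _ _),
    intervalIntegral.integral_const_mul, intervalIntegral.integral_const_mul,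
    integral_cos_mul' h1ne, integral_cos_mul' h3ne]
  have e1 : (4*m - 1) * (π / 4) = n * π - π/4 := by rw [hm]; ring
  have e3 : (4*m - 3) * (π / 4) = n * π - 3 * (π/4) := by rw [hm]; ring
  have s1 : Real.sin ((4*m - 1) * (π / 4)) = -(-1:ℝ)^n * (Real.sqrt 2 / 2) := by
    rw [e1, Real.sin_nat_mul_pi_sub, Real.sin_pi_div_four]
    ring
  have s3 : Real.sin ((4*m - 3) * (π / 4)) = -(-1:ℝ)^n * (Real.sqrt 2 / 2) := by
    rw [e3, Real.sin_nat_mul_pi_sub]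
    have : Real.sin (3 * (π/4)) = Real.sqrt 2 / 2 := by
      rw [show 3 * (π/4) = π - π/4 by ring, Real.sin_pi_sub, Real.sin_pi_div_four]
    rw [this]; ring
  rw [s1, s3]
  field_simp
  ring
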